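/- Let 1 ≤ r < q < ∞, 0 ≤ γ < 1, and f, g ∈ PJN^+_{q,γ,r}(Ω_T). Then ||max{f, g}||_{PJN^+_{q,γ,r}(Ω_T)} ≤ ||f||_{PJN^+_{q,γ,r}(Ω_T)} + ||g||_{PJN^+_{q,γ,r}(Ω_T)} and the same bound holds for min{f, g}. -/

import Mathlib

open MeasureTheory ENNReal Set Filter

noncomputable section

/-- A parabolic rectangle in `ℝⁿ × ℝ`, determined by its center `(x, t)` and
edge length `L > 0`. -/
structure ParRect (n : ℕ) where
  x : Fin n → ℝ
  t : ℝ
  L : ℝ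
  hL : 0 < L

variable {n : ℕ}

/-- The spatial cube `Q(x, L)`. -/
def ParRect.base (R : ParRect n) : Set (Fin n → ℝ) :=
  {y | ∀ i, |y i - R.x i| ≤ R.L}

/-- The parabolic rectangle `R = Q(x,L) × (t - L^p, t + L^p)`. -/
def ParRect.rect (p : ℝ) (R : ParRect n) : Set ((Fin n → ℝ) × ℝ) :=
  R.base ×ˢ Ioo (R.t - R.L ^ p) (R.t + R.L ^ p)

/-- The upper part `R⁺(γ) = Q(x,L) × (t + γL^p, t + L^p)`. -/
def ParRect.upper (p γ : ℝ) (R : ParRect n) : Set ((Fin n → ℝ) × ℝ) :=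
  R.base ×ˢ Ioo (R.t + γ * R.L ^ p) (R.t + R.L ^ p)

/-- The lower part `R⁻(γ) = Q(x,L) × (t - L^p, t - γL^p)`. -/
def ParRect.lower (p γ : ℝ) (R : ParRect n) : Set ((Fin n → ℝ) × ℝ) :=
  R.base ×ˢ Ioo (R.t - R.L ^ p) (R.t - γ * R.L ^ p)

/-- Positive part of a real number. -/
def posPart' (x : ℝ) : ℝ := max x 0

/-- The parabolic `r`-oscillation
`inf_c ( ⨍_{R⁺(γ)} (f-c)₊^r + ⨍_{R⁻(γ)} (f-c)₋^r )` of `f` on `R`. -/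
def osc (p γ r : ℝ) (f : (Fin n → ℝ) × ℝ → ℝ) (R : ParRect n) : ℝ≥0∞ :=
  ⨅ c : ℝ,
    ((∫⁻ z in R.upper p γ, ENNReal.ofReal (posPart' (f z - c) ^ r)) / volume (R.upper p γ) +
     (∫⁻ z in R.lower p γ, ENNReal.ofReal (posPart' (c - f z) ^ r)) / volume (R.lower p γ))

/-- The `q`-th power of the parabolic John–Nirenberg norm `‖f‖_{PJN⁺_{q,γ,r}(Ω)}^q`:
the supremum over countable pairwise disjoint collections of parabolic subrectangles of `Ω` of
`Σᵢ |Rᵢ⁺(γ)| · osc(f, Rᵢ)^{q/r}`. -/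
def pjnQ (p q γ r : ℝ) (f : (Fin n → ℝ) × ℝ → ℝ) (Ω : Set ((Fin n → ℝ) × ℝ)) : ℝ≥0∞ :=
  ⨆ (Rs : ℕ → ParRect n) (_ : ∀ i, (Rs i).rect p ⊆ Ω)
    (_ : Pairwise fun i j => Disjoint ((Rs i).rect p) ((Rs j).rect p)),
    ∑' i, volume ((Rs i).upper p γ) * osc p γ r f (Rs i) ^ (q / r)

/-- The parabolic John–Nirenberg norm `‖f‖_{PJN⁺_{q,γ,r}(Ω)}`. -/
def pjn (p q γ r : ℝ) (f : (Fin n → ℝ) × ℝ → ℝ) (Ω : Set ((Fin n → ℝ) × ℝ)) : ℝ≥0∞ :=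
  pjnQ p q γ r f Ω ^ (1 / q)

/-- The parabolic BMO norm `‖f‖_{PBMO⁺_{γ,r}(Ω)}`. -/
def pbmo (p γ r : ℝ) (f : (Fin n → ℝ) × ℝ → ℝ) (Ω : Set ((Fin n → ℝ) × ℝ)) : ℝ≥0∞ :=
  ⨆ (R : ParRect n) (_ : R.rect p ⊆ Ω), osc p γ r f R ^ (1 / r)


namespace PJNAux

variable {n : ℕ}

lemma posPart'_nonneg (x : ℝ) : 0 ≤ posPart' x := le_max_right _ _
lemma le_posPart' (x : ℝ) : x ≤ posPart' x := le_max_left _ _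
lemma posPart'_le {x y : ℝ} (h0 : 0 ≤ y) (hx : x ≤ y) : posPart' x ≤ y := max_le hx h0

/-- The quantity inside the infimum defining `osc`. -/
def S (p γ r : ℝ) (h : (Fin n → ℝ) × ℝ → ℝ) (c : ℝ) (R : ParRect n) : ℝ≥0∞ :=
  (∫⁻ z in R.upper p γ, ENNReal.ofReal (posPart' (h z - c) ^ r)) / volume (R.upper p γ) +
  (∫⁻ z in R.lower p γ, ENNReal.ofReal (posPart' (c - h z) ^ r)) / volume (R.lower p γ)

lemma osc_eq (p γ r : ℝ) (h : (Fin n → ℝ) × ℝ → ℝ) (R : ParRect n) :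
    osc p γ r h R = ⨅ c, S p γ r h c R := rfl

lemma measurableSet_base (R : ParRect n) : MeasurableSet R.base := by
  have : R.base = ⋂ i, {y : Fin n → ℝ | |y i - R.x i| ≤ R.L} := by
    ext y; simp [ParRect.base, Set.mem_iInter]
  rw [this]
  exact MeasurableSet.iInter fun i =>
    measurableSet_le (((measurable_pi_apply i).sub measurable_const).abs) measurable_const

lemma measurableSet_upper (p γ : ℝ) (R : ParRect n) : MeasurableSet (R.upper p γ) :=
  (measurableSet_base R).prod measurableSet_Ioo

lemma measurableSet_lower (p γ : ℝ) (R : ParRect n) : MeasurableSet (R.lower p γ) :=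
  (measurableSet_base R).prod measurableSet_Ioo

/-- The normalized measure on `R⁺(γ) ∪ R⁻(γ)`. -/
def mu (p γ : ℝ) (R : ParRect n) : Measure ((Fin n → ℝ) × ℝ) :=
  (volume (R.upper p γ))⁻¹ • volume.restrict (R.upper p γ) +
  (volume (R.lower p γ))⁻¹ • volume.restrict (R.lower p γ)

/-- The function whose `L^r(mu)` norm computes `S`. -/
def F (h : (Fin n → ℝ) × ℝ → ℝ) (c : ℝ) (R : ParRect n) : (Fin n → ℝ) × ℝ → ℝ≥0∞ :=
  fun z => if R.t < z.2 then ENNReal.ofReal (posPart' (h z - c))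
    else ENNReal.ofReal (posPart' (c - h z))

lemma F_measurable {h : (Fin n → ℝ) × ℝ → ℝ} (hh : Measurable h) (c : ℝ) (R : ParRect n) :
    Measurable (F h c R) := by
  unfold F posPart'
  apply Measurable.ite (measurableSet_lt measurable_const measurable_snd)
  · exact ENNReal.measurable_ofReal.comp ((hh.sub measurable_const).max measurable_const)
  · exact ENNReal.measurable_ofReal.comp ((measurable_const.sub hh).max measurable_const)

lemma S_eq (p γ : ℝ) {r : ℝ} (hr : 0 ≤ r) (hγ0 : 0 ≤ γ) (h : (Fin n → ℝ) × ℝ → ℝ) (c : ℝ)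
    (R : ParRect n) :
    S p γ r h c R = ∫⁻ z, F h c R z ^ r ∂(mu p γ R) := by
  have hL : (0:ℝ) ≤ R.L ^ p := Real.rpow_nonneg R.hL.le p
  have hup : ∫⁻ z in R.upper p γ, F h c R z ^ r
      = ∫⁻ z in R.upper p γ, ENNReal.ofReal (posPart' (h z - c) ^ r) := by
    apply setLIntegral_congr_fun (measurableSet_upper p γ R)
    intro z hz
    have h1 : R.t + γ * R.L ^ p < z.2 := hz.2.1
    have hz2 : R.t < z.2 := by nlinarith [mul_nonneg hγ0 hL]
    simp only [F]
    rw [if_pos hz2, ← ENNReal.ofReal_rpow_of_nonneg (posPart'_nonneg _) hr]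
  have hlow : ∫⁻ z in R.lower p γ, F h c R z ^ r
      = ∫⁻ z in R.lower p γ, ENNReal.ofReal (posPart' (c - h z) ^ r) := by
    apply setLIntegral_congr_fun (measurableSet_lower p γ R)
    intro z hz
    have h1 : z.2 < R.t - γ * R.L ^ p := hz.2.2
    have hz2 : ¬ R.t < z.2 := by push_neg; nlinarith [mul_nonneg hγ0 hL]
    simp only [F]
    rw [if_neg hz2, ← ENNReal.ofReal_rpow_of_nonneg (posPart'_nonneg _) hr]
  rw [mu, lintegral_add_measure, lintegral_smul_measure, lintegral_smul_measure, hup, hlow, S,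
    ENNReal.div_eq_inv_mul, ENNReal.div_eq_inv_mul]
  simp only [smul_eq_mul]

lemma F_add_le (op : ℝ → ℝ → ℝ)
    (hop : ∀ a b c d : ℝ, posPart' (op a b - op c d) ≤ posPart' (a - c) + posPart' (b - d))
    (f g : (Fin n → ℝ) × ℝ → ℝ) (c d : ℝ) (R : ParRect n) (z : (Fin n → ℝ) × ℝ) :
    F (fun z => op (f z) (g z)) (op c d) R z ≤ F f c R z + F g d R z := by
  simp only [F]
  split
  · rw [← ENNReal.ofReal_add (posPart'_nonneg _) (posPart'_nonneg _)]
    exact ENNReal.ofReal_le_ofReal (hop _ _ _ _)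
  · rw [← ENNReal.ofReal_add (posPart'_nonneg _) (posPart'_nonneg _)]
    exact ENNReal.ofReal_le_ofReal (hop _ _ _ _)

lemma oscRoot_le (p γ : ℝ) {r : ℝ} (hr1 : 1 ≤ r) (hγ0 : 0 ≤ γ)
    (op : ℝ → ℝ → ℝ)
    (hop : ∀ a b c d : ℝ, posPart' (op a b - op c d) ≤ posPart' (a - c) + posPart' (b - d))
    (f g : (Fin n → ℝ) × ℝ → ℝ) (hf : Measurable f) (hg : Measurable g) (R : ParRect n) :
    osc p γ r (fun z => op (f z) (g z)) R ^ (1/r) ≤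
      osc p γ r f R ^ (1/r) + osc p γ r g R ^ (1/r) := by
  have hr0 : (0:ℝ) < r := lt_of_lt_of_le one_pos hr1
  have hinv : (0:ℝ) < 1/r := by positivity
  have key : ∀ c d : ℝ, osc p γ r (fun z => op (f z) (g z)) R ^ (1/r) ≤
      S p γ r f c R ^ (1/r) + S p γ r g d R ^ (1/r) := by
    intro c d
    have h1 : osc p γ r (fun z => op (f z) (g z)) R
        ≤ S p γ r (fun z => op (f z) (g z)) (op c d) R := iInf_le _ _
    calc osc p γ r (fun z => op (f z) (g z)) R ^ (1/r)
        ≤ (S p γ r (fun z => op (f z) (g z)) (op c d) R) ^ (1/r) :=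
          ENNReal.rpow_le_rpow h1 hinv.le
      _ = (∫⁻ z, F (fun z => op (f z) (g z)) (op c d) R z ^ r ∂(mu p γ R)) ^ (1/r) := by
          rw [S_eq p γ hr0.le hγ0]
      _ ≤ (∫⁻ z, (F f c R + F g d R) z ^ r ∂(mu p γ R)) ^ (1/r) := by
          refine ENNReal.rpow_le_rpow (lintegral_mono fun z => ?_) hinv.le
          exact ENNReal.rpow_le_rpow (F_add_le op hop f g c d R z) hr0.le
      _ ≤ (∫⁻ z, F f c R z ^ r ∂(mu p γ R)) ^ (1/r)
            + (∫⁻ z, F g d R z ^ r ∂(mu p γ R)) ^ (1/r) :=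
          ENNReal.lintegral_Lp_add_le (F_measurable hf c R).aemeasurable
            (F_measurable hg d R).aemeasurable hr1
      _ = S p γ r f c R ^ (1/r) + S p γ r g d R ^ (1/r) := by
          rw [S_eq p γ hr0.le hγ0, S_eq p γ hr0.le hγ0]
  have hiso : ∀ h : (Fin n → ℝ) × ℝ → ℝ,
      osc p γ r h R ^ (1/r) = ⨅ c, S p γ r h c R ^ (1/r) := by
    intro h
    rw [osc_eq]
    have := (ENNReal.orderIsoRpow (1/r) hinv).map_iInf (fun c => S p γ r h c R)
    simp only [ENNReal.orderIsoRpow_apply] at this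
    exact this
  rw [hiso f, hiso g, ENNReal.iInf_add]
  refine le_iInf fun c => ?_
  rw [ENNReal.add_iInf]
  exact le_iInf fun d => key c d

lemma tsum_rpow_le (p q γ : ℝ) {r : ℝ} (hq : 1 ≤ q) (hr0 : 0 < r)
    (Ω : Set ((Fin n → ℝ) × ℝ))
    (f g h : (Fin n → ℝ) × ℝ → ℝ)
    (hosc : ∀ R : ParRect n,
      osc p γ r h R ^ (1/r) ≤ osc p γ r f R ^ (1/r) + osc p γ r g R ^ (1/r))
    (Rs : ℕ → ParRect n) (hsub : ∀ i, (Rs i).rect p ⊆ Ω)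
    (hdis : Pairwise fun i j => Disjoint ((Rs i).rect p) ((Rs j).rect p)) :
    (∑' i, volume ((Rs i).upper p γ) * osc p γ r h (Rs i) ^ (q / r)) ^ (1/q)
      ≤ pjn p q γ r f Ω + pjn p q γ r g Ω := by
  have hq0 : (0:ℝ) < q := lt_of_lt_of_le one_pos hq
  set u : ((Fin n → ℝ) × ℝ → ℝ) → ℕ → ℝ≥0∞ := fun h i =>
    volume ((Rs i).upper p γ) ^ (1/q) * osc p γ r h (Rs i) ^ (1/r) with hu
  have hpow : ∀ (h' : (Fin n → ℝ) × ℝ → ℝ) (i : ℕ),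
      volume ((Rs i).upper p γ) * osc p γ r h' (Rs i) ^ (q / r) = u h' i ^ q := by
    intro h' i
    rw [hu]
    rw [ENNReal.mul_rpow_of_nonneg _ _ hq0.le, ← ENNReal.rpow_mul, ← ENNReal.rpow_mul,
      one_div_mul_cancel hq0.ne', ENNReal.rpow_one, one_div_mul_eq_div]
  have step1 : ∀ i, u h i ≤ u f i + u g i := by
    intro i
    calc u h i ≤ volume ((Rs i).upper p γ) ^ (1/q)
          * (osc p γ r f (Rs i) ^ (1/r) + osc p γ r g (Rs i) ^ (1/r)) :=
        mul_le_mul_right (hosc (Rs i)) _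
      _ = u f i + u g i := by rw [mul_add]
  have minkow : (∑' i, (u f i + u g i) ^ q) ^ (1/q)
      ≤ (∑' i, u f i ^ q) ^ (1/q) + (∑' i, u g i ^ q) ^ (1/q) := by
    have := ENNReal.lintegral_Lp_add_le (μ := Measure.count (α := ℕ))
      (f := u f) (g := u g)
      (measurable_from_top).aemeasurable (measurable_from_top).aemeasurable hq
    simpa [lintegral_count] using this
  have hb : ∀ h' : (Fin n → ℝ) × ℝ → ℝ, (∑' i, u h' i ^ q) ≤ pjnQ p q γ r h' Ω := by
    intro h'
    have e : ∑' i, u h' i ^ q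
        = ∑' i, volume ((Rs i).upper p γ) * osc p γ r h' (Rs i) ^ (q / r) := by
      exact tsum_congr fun i => (hpow h' i).symm
    rw [e, pjnQ]
    exact le_iSup_of_le Rs (le_iSup_of_le hsub (le_iSup_of_le hdis le_rfl))
  calc (∑' i, volume ((Rs i).upper p γ) * osc p γ r h (Rs i) ^ (q / r)) ^ (1/q)
      = (∑' i, u h i ^ q) ^ (1/q) := by rw [tsum_congr fun i => hpow h i]
    _ ≤ (∑' i, (u f i + u g i) ^ q) ^ (1/q) := by
        refine ENNReal.rpow_le_rpow (Summable.tsum_le_tsum (fun i => ?_)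
          ENNReal.summable ENNReal.summable) (by positivity)
        exact ENNReal.rpow_le_rpow (step1 i) hq0.le
    _ ≤ (∑' i, u f i ^ q) ^ (1/q) + (∑' i, u g i ^ q) ^ (1/q) := minkow
    _ ≤ pjnQ p q γ r f Ω ^ (1/q) + pjnQ p q γ r g Ω ^ (1/q) :=
        add_le_add (ENNReal.rpow_le_rpow (hb f) (by positivity))
          (ENNReal.rpow_le_rpow (hb g) (by positivity))
    _ = pjn p q γ r f Ω + pjn p q γ r g Ω := rfl

lemma pjn_op_le (p q γ : ℝ) {r : ℝ} (hγ0 : 0 ≤ γ) (hq : 1 ≤ q) (hr1 : 1 ≤ r)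
    (Ω : Set ((Fin n → ℝ) × ℝ)) (op : ℝ → ℝ → ℝ)
    (hop : ∀ a b c d : ℝ, posPart' (op a b - op c d) ≤ posPart' (a - c) + posPart' (b - d))
    (f g : (Fin n → ℝ) × ℝ → ℝ) (hf : Measurable f) (hg : Measurable g) :
    pjn p q γ r (fun z => op (f z) (g z)) Ω ≤ pjn p q γ r f Ω + pjn p q γ r g Ω := by
  have hq0 : (0:ℝ) < q := lt_of_lt_of_le one_pos hq
  have hr0 : (0:ℝ) < r := lt_of_lt_of_le one_pos hr1
  set B := pjn p q γ r f Ω + pjn p q γ r g Ω with hB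
  have hQ : pjnQ p q γ r (fun z => op (f z) (g z)) Ω ≤ B ^ q := by
    rw [pjnQ]
    refine iSup_le fun Rs => iSup_le fun hsub => iSup_le fun hdis => ?_
    have h := tsum_rpow_le p q γ hq hr0 Ω f g (fun z => op (f z) (g z))
      (fun R => oscRoot_le p γ hr1 hγ0 op hop f g hf hg R) Rs hsub hdis
    calc (∑' i, volume ((Rs i).upper p γ)
          * osc p γ r (fun z => op (f z) (g z)) (Rs i) ^ (q / r))
        = ((∑' i, volume ((Rs i).upper p γ)
          * osc p γ r (fun z => op (f z) (g z)) (Rs i) ^ (q / r)) ^ (1/q)) ^ q := by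
          rw [← ENNReal.rpow_mul, one_div_mul_cancel hq0.ne', ENNReal.rpow_one]
      _ ≤ B ^ q := ENNReal.rpow_le_rpow h hq0.le
  calc pjn p q γ r (fun z => op (f z) (g z)) Ω
      = pjnQ p q γ r (fun z => op (f z) (g z)) Ω ^ (1/q) := rfl
    _ ≤ (B ^ q) ^ (1/q) := ENNReal.rpow_le_rpow hQ (by positivity)
    _ = B := by rw [← ENNReal.rpow_mul, mul_one_div_cancel hq0.ne', ENNReal.rpow_one]

lemma hop_max : ∀ a b c d : ℝ,
    posPart' (max a b - max c d) ≤ posPart' (a - c) + posPart' (b - d) := by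
  intro a b c d
  have h1 := le_posPart' (a - c); have h2 := le_posPart' (b - d)
  have h3 := posPart'_nonneg (a - c); have h4 := posPart'_nonneg (b - d)
  apply posPart'_le (by linarith)
  rcases le_total a b with h | h
  · rw [max_eq_right h]; have := le_max_right c d; linarith
  · rw [max_eq_left h]; have := le_max_left c d; linarith

lemma hop_min : ∀ a b c d : ℝ,
    posPart' (min a b - min c d) ≤ posPart' (a - c) + posPart' (b - d) := by
  intro a b c d
  have h1 := le_posPart' (a - c); have h2 := le_posPart' (b - d)
  have h3 := posPart'_nonneg (a - c); have h4 := posPart'_nonneg (b - d)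
  apply posPart'_le (by linarith)
  rcases le_total c d with h | h
  · rw [min_eq_left h]; have := min_le_left a b; linarith
  · rw [min_eq_right h]; have := min_le_right a b; linarith

end PJNAux


/-- For `1 ≤ r < q`, the `PJN⁺_{q,γ,r}` norms of `max{f,g}` and `min{f,g}` are bounded by
`‖f‖ + ‖g‖`. -/
theorem pjn_max_min (n : ℕ) (p q γ r : ℝ) (hp : 1 < p) (hγ0 : 0 ≤ γ) (hγ1 : γ < 1)
    (hq : 1 < q) (hr1 : 1 ≤ r) (hrq : r < q)
    (Ω : Set (Fin n → ℝ)) (T : ℝ) (hT : 0 < T)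
    (f g : (Fin n → ℝ) × ℝ → ℝ) (hf : Measurable f) (hg : Measurable g)
    (hfin : pjn p q γ r f (Ω ×ˢ Ioo (0 : ℝ) T) < ⊤)
    (hgin : pjn p q γ r g (Ω ×ˢ Ioo (0 : ℝ) T) < ⊤) :
    pjn p q γ r (fun z => max (f z) (g z)) (Ω ×ˢ Ioo (0 : ℝ) T) ≤
      pjn p q γ r f (Ω ×ˢ Ioo (0 : ℝ) T) + pjn p q γ r g (Ω ×ˢ Ioo (0 : ℝ) T) ∧
    pjn p q γ r (fun z => min (f z) (g z)) (Ω ×ˢ Ioo (0 : ℝ) T) ≤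
      pjn p q γ r f (Ω ×ˢ Ioo (0 : ℝ) T) + pjn p q γ r g (Ω ×ˢ Ioo (0 : ℝ) T) := by
  constructor
  · exact PJNAux.pjn_op_le p q γ hγ0 hq.le hr1 _ max PJNAux.hop_max f g hf hg
  · exact PJNAux.pjn_op_le p q γ hγ0 hq.le hr1 _ min PJNAux.hop_min f g hf hg

end
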